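/- arXiv:1109.3229 — 2 statements merged into one kernel-verified Lean document; each statement's English description precedes it below -/
import Mathlib

section
/- The Hurwitz rationals in Δ̄ form a ubiquitous system with respect to ρ(m) = 2/(η(m)^{1/4} m²): for every ball B₀ ⊆ Δ̄ and all sufficiently large N, the Lebesgue measure of B₀ ∩ ⋃_{1≤|q|₂≤N} ⋃_{p∈𝓗} B(p·q⁻¹, ρ(N)) is at least |B₀|/2. -/
open MeasureTheory Metric Filter Set Quaternion

noncomputable instance : MeasurableSpace (Quaternion ℝ) := borel _
instance : BorelSpace (Quaternion ℝ) := ⟨rfl⟩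

/-- Lebesgue measure on the quaternions, transported from `ℝ⁴`. -/
noncomputable instance : MeasureSpace (Quaternion ℝ) :=
  ⟨Measure.map (Quaternion.equivTuple ℝ).symm volume⟩

/-- A quaternion is a Hurwitz integer if all its coordinates are integers or
all its coordinates are in `ℤ + 1/2`. -/
def IsHurwitz (x : Quaternion ℝ) : Prop :=
  (∃ a b c d : ℤ, x.re = a ∧ x.imI = b ∧ x.imJ = c ∧ x.imK = d) ∨
  (∃ a b c d : ℤ, x.re = a + 1/2 ∧ x.imI = b + 1/2 ∧ x.imJ = c + 1/2 ∧ x.imK = d + 1/2)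

/-- The fundamental domain `Δ = [0,1)³ × [0,1/2)` for Hurwitz translations. -/
def fundDom : Set (Quaternion ℝ) :=
  {x | 0 ≤ x.re ∧ x.re < 1 ∧ 0 ≤ x.imI ∧ x.imI < 1 ∧ 0 ≤ x.imJ ∧ x.imJ < 1 ∧
    0 ≤ x.imK ∧ x.imK < 1/2}

/-- The closed fundamental domain `Δ̄ = [0,1]³ × [0,1/2]`. -/
def fundDomCl : Set (Quaternion ℝ) :=
  {x | 0 ≤ x.re ∧ x.re ≤ 1 ∧ 0 ≤ x.imI ∧ x.imI ≤ 1 ∧ 0 ≤ x.imJ ∧ x.imJ ≤ 1 ∧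
    0 ≤ x.imK ∧ x.imK ≤ 1/2}

lemma norm_sq_eq (z : Quaternion ℝ) : ‖z‖^2 = z.re^2 + z.imI^2 + z.imJ^2 + z.imK^2 := by
  rw [sq, ← Quaternion.normSq_eq_norm_mul_self, Quaternion.normSq_def']

lemma coord_le_norm (z : Quaternion ℝ) :
    |z.re| ≤ ‖z‖ ∧ |z.imI| ≤ ‖z‖ ∧ |z.imJ| ≤ ‖z‖ ∧ |z.imK| ≤ ‖z‖ := by
  have h := norm_sq_eq z
  have h0 : (0:ℝ) ≤ ‖z‖ := norm_nonneg z
  refine ⟨?_, ?_, ?_, ?_⟩ <;> nlinarith [abs_nonneg z.re, abs_nonneg z.imI, abs_nonneg z.imJ,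
    abs_nonneg z.imK, sq_abs z.re, sq_abs z.imI, sq_abs z.imJ, sq_abs z.imK]

lemma norm_le_of_coords {z : Quaternion ℝ} {s : ℝ} (hs : 0 ≤ s) (h1 : |z.re| ≤ s)
    (h2 : |z.imI| ≤ s) (h3 : |z.imJ| ≤ s) (h4 : |z.imK| ≤ s) : ‖z‖ ≤ 2*s := by
  have h := norm_sq_eq z
  have h0 : (0:ℝ) ≤ ‖z‖ := norm_nonneg z
  have hsq : ‖z‖^2 ≤ (2*s)^2 := by
    nlinarith [sq_abs z.re, sq_abs z.imI, sq_abs z.imJ, sq_abs z.imK, abs_nonneg z.re,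
      abs_nonneg z.imI, abs_nonneg z.imJ, abs_nonneg z.imK]
  exact (pow_le_pow_iff_left₀ h0 (by linarith) (by norm_num)).mp hsq

lemma meas_symm : Measurable ((Quaternion.equivTuple ℝ).symm : (Fin 4 → ℝ) → Quaternion ℝ) := by
  have : Continuous ((Quaternion.equivTuple ℝ).symm : (Fin 4 → ℝ) → Quaternion ℝ) :=
    Quaternion.linearIsometryEquivTuple.symm.continuous.comp
      (PiLp.continuousLinearEquiv 2 ℝ (fun _ : Fin 4 => ℝ)).symm.continuous
  exact this.measurable

lemma vol_apply {s : Set (Quaternion ℝ)} (hs : MeasurableSet s) :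
    volume s = volume ((Quaternion.equivTuple ℝ).symm ⁻¹' s) :=
  Measure.map_apply meas_symm hs

/-- coordinates of `equivTuple.symm v - c`. -/
lemma symm_sub_coords (v : Fin 4 → ℝ) (c : Quaternion ℝ) :
    ((Quaternion.equivTuple ℝ).symm v - c).re = v 0 - c.re ∧
    ((Quaternion.equivTuple ℝ).symm v - c).imI = v 1 - c.imI ∧
    ((Quaternion.equivTuple ℝ).symm v - c).imJ = v 2 - c.imJ ∧
    ((Quaternion.equivTuple ℝ).symm v - c).imK = v 3 - c.imK := ⟨rfl, rfl, rfl, rfl⟩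

lemma vol_closedBall_le (c : Quaternion ℝ) (r : ℝ) (hr : 0 ≤ r) :
    volume (closedBall c r) ≤ ENNReal.ofReal ((2*r)^4) := by
  rw [vol_apply measurableSet_closedBall]
  have hsub : ((Quaternion.equivTuple ℝ).symm ⁻¹' closedBall c r) ⊆
      Set.pi univ (fun i => Icc ((Quaternion.equivTuple ℝ c) i - r) ((Quaternion.equivTuple ℝ c) i + r)) := by
    intro v hv
    simp only [mem_preimage, mem_closedBall, dist_eq_norm] at hv
    have h := coord_le_norm ((Quaternion.equivTuple ℝ).symm v - c)
    obtain ⟨e1, e2, e3, e4⟩ := symm_sub_coords v c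
    have H1 : |v 0 - c.re| ≤ r := by rw [← e1]; exact le_trans h.1 hv
    have H2 : |v 1 - c.imI| ≤ r := by rw [← e2]; exact le_trans h.2.1 hv
    have H3 : |v 2 - c.imJ| ≤ r := by rw [← e3]; exact le_trans h.2.2.1 hv
    have H4 : |v 3 - c.imK| ≤ r := by rw [← e4]; exact le_trans h.2.2.2 hv
    intro i _
    fin_cases i
    · exact ⟨show c.re - r ≤ v 0 by linarith [(abs_le.mp H1).1],
        show v 0 ≤ c.re + r by linarith [(abs_le.mp H1).2]⟩
    · exact ⟨show c.imI - r ≤ v 1 by linarith [(abs_le.mp H2).1],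
        show v 1 ≤ c.imI + r by linarith [(abs_le.mp H2).2]⟩
    · exact ⟨show c.imJ - r ≤ v 2 by linarith [(abs_le.mp H3).1],
        show v 2 ≤ c.imJ + r by linarith [(abs_le.mp H3).2]⟩
    · exact ⟨show c.imK - r ≤ v 3 by linarith [(abs_le.mp H4).1],
        show v 3 ≤ c.imK + r by linarith [(abs_le.mp H4).2]⟩
  calc volume _ ≤ volume (Set.pi univ (fun i => Icc ((Quaternion.equivTuple ℝ c) i - r) ((Quaternion.equivTuple ℝ c) i + r))) := measure_mono hsub
    _ = ∏ i : Fin 4, ENNReal.ofReal ((equivTuple ℝ c i + r) - (equivTuple ℝ c i - r)) := by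
        rw [volume_pi_pi]; simp [Real.volume_Icc]
    _ ≤ ENNReal.ofReal ((2*r)^4) := by
        have : ∀ i : Fin 4, (equivTuple ℝ c i + r) - (equivTuple ℝ c i - r) = 2*r := by intro; ring
        simp only [this]
        rw [Finset.prod_const, ← ENNReal.ofReal_pow (by linarith)]
        simp

lemma vol_closedBall_ge (c : Quaternion ℝ) (r : ℝ) (hr : 0 ≤ r) :
    ENNReal.ofReal (r^4) ≤ volume (closedBall c r) := by
  rw [vol_apply measurableSet_closedBall]
  have hsub : Set.pi univ (fun i => Icc ((Quaternion.equivTuple ℝ c) i - r/2)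
      ((Quaternion.equivTuple ℝ c) i + r/2)) ⊆
      ((Quaternion.equivTuple ℝ).symm ⁻¹' closedBall c r) := by
    intro v hv
    simp only [mem_preimage, mem_closedBall, dist_eq_norm]
    obtain ⟨e1, e2, e3, e4⟩ := symm_sub_coords v c
    have g0 : c.re - r/2 ≤ v 0 ∧ v 0 ≤ c.re + r/2 := hv 0 (mem_univ _)
    have g1 : c.imI - r/2 ≤ v 1 ∧ v 1 ≤ c.imI + r/2 := hv 1 (mem_univ _)
    have g2 : c.imJ - r/2 ≤ v 2 ∧ v 2 ≤ c.imJ + r/2 := hv 2 (mem_univ _)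
    have g3 : c.imK - r/2 ≤ v 3 ∧ v 3 ≤ c.imK + r/2 := hv 3 (mem_univ _)
    have h2 : (2 : ℝ) * (r/2) = r := by ring
    rw [← h2]
    apply norm_le_of_coords (by linarith)
    · rw [e1, abs_le]; exact ⟨by linarith [g0.1], by linarith [g0.2]⟩
    · rw [e2, abs_le]; exact ⟨by linarith [g1.1], by linarith [g1.2]⟩
    · rw [e3, abs_le]; exact ⟨by linarith [g2.1], by linarith [g2.2]⟩
    · rw [e4, abs_le]; exact ⟨by linarith [g3.1], by linarith [g3.2]⟩
  calc ENNReal.ofReal (r^4)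
      = volume (Set.pi univ (fun i => Icc ((Quaternion.equivTuple ℝ c) i - r/2)
        ((Quaternion.equivTuple ℝ c) i + r/2))) := by
        rw [volume_pi_pi]
        have : ∀ i : Fin 4, volume (Icc ((Quaternion.equivTuple ℝ c) i - r/2)
            ((Quaternion.equivTuple ℝ c) i + r/2)) = ENNReal.ofReal r := by
          intro i; rw [Real.volume_Icc]; congr 1; ring
        simp only [this]
        rw [Finset.prod_const, ← ENNReal.ofReal_pow hr]
        simp
    _ ≤ _ := measure_mono hsub

lemma IsHurwitz.sub {x y : Quaternion ℝ} (hx : IsHurwitz x) (hy : IsHurwitz y) :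
    IsHurwitz (x - y) := by
  obtain ⟨a,b,c,d,h1,h2,h3,h4⟩ | ⟨a,b,c,d,h1,h2,h3,h4⟩ := hx <;>
    obtain ⟨a',b',c',d',g1,g2,g3,g4⟩ | ⟨a',b',c',d',g1,g2,g3,g4⟩ := hy
  · exact Or.inl ⟨a-a', b-b', c-c', d-d',
      (by push_cast; simp [h1,h2,h3,h4,g1,g2,g3,g4]; try ring), (by push_cast; simp [h2,g2]),
      (by push_cast; simp [h3,g3]), (by push_cast; simp [h4,g4])⟩
  · exact Or.inr ⟨a-a'-1, b-b'-1, c-c'-1, d-d'-1,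
      (by push_cast; simp [h1,g1]; try ring), (by push_cast; simp [h2,g2]; try ring),
      (by push_cast; simp [h3,g3]; try ring), (by push_cast; simp [h4,g4]; try ring)⟩
  · exact Or.inr ⟨a-a', b-b', c-c', d-d',
      (by push_cast; simp [h1,g1]; try ring), (by push_cast; simp [h2,g2]; try ring),
      (by push_cast; simp [h3,g3]; try ring), (by push_cast; simp [h4,g4]; try ring)⟩
  · exact Or.inl ⟨a-a', b-b', c-c', d-d',
      (by push_cast; simp [h1,g1]; try ring), (by push_cast; simp [h2,g2]; try ring),
      (by push_cast; simp [h3,g3]; try ring), (by push_cast; simp [h4,g4]; try ring)⟩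

lemma int_sq_ge {a : ℤ} (ha : a ≠ 0) : (1:ℝ) ≤ (a:ℝ)^2 := by
  have h1 : 1 ≤ |a| := Int.one_le_abs ha
  have : 1 ≤ a^2 := by nlinarith [sq_abs a, abs_nonneg a]
  exact_mod_cast this

lemma half_sq_ge (a : ℤ) : (1/4:ℝ) ≤ ((a:ℝ)+1/2)^2 := by
  have h : 0 ≤ (a:ℝ)^2 + a := by
    have : (0:ℤ) ≤ a^2 + a := by nlinarith [sq_nonneg (2*a+1)]
    exact_mod_cast this
  nlinarith

lemma IsHurwitz.one_le_norm {x : Quaternion ℝ} (hx : IsHurwitz x) (hx0 : x ≠ 0) :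
    1 ≤ ‖x‖ := by
  have hn := norm_sq_eq x
  have h0 : (0:ℝ) ≤ ‖x‖ := norm_nonneg x
  have hsq : 1 ≤ ‖x‖^2 := by
    obtain ⟨a,b,c,d,h1,h2,h3,h4⟩ | ⟨a,b,c,d,h1,h2,h3,h4⟩ := hx
    · have : a ≠ 0 ∨ b ≠ 0 ∨ c ≠ 0 ∨ d ≠ 0 := by
        by_contra h
        push_neg at h
        obtain ⟨e1,e2,e3,e4⟩ := h
        apply hx0
        ext <;> simp [h1,h2,h3,h4,e1,e2,e3,e4]
      rw [hn, h1, h2, h3, h4]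
      rcases this with h|h|h|h
      · nlinarith [int_sq_ge h, sq_nonneg (b:ℝ), sq_nonneg (c:ℝ), sq_nonneg (d:ℝ)]
      · nlinarith [int_sq_ge h, sq_nonneg (a:ℝ), sq_nonneg (c:ℝ), sq_nonneg (d:ℝ)]
      · nlinarith [int_sq_ge h, sq_nonneg (a:ℝ), sq_nonneg (b:ℝ), sq_nonneg (d:ℝ)]
      · nlinarith [int_sq_ge h, sq_nonneg (a:ℝ), sq_nonneg (b:ℝ), sq_nonneg (c:ℝ)]
    · rw [hn, h1, h2, h3, h4]
      nlinarith [half_sq_ge a, half_sq_ge b, half_sq_ge c, half_sq_ge d]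
  nlinarith

/-- Parametrization of Hurwitz integers. -/
noncomputable def hw (j : (Fin 4 → ℤ) × Bool) : Quaternion ℝ :=
  ⟨j.1 0 + (if j.2 then (1:ℝ)/2 else 0), j.1 1 + (if j.2 then (1:ℝ)/2 else 0),
   j.1 2 + (if j.2 then (1:ℝ)/2 else 0), j.1 3 + (if j.2 then (1:ℝ)/2 else 0)⟩

lemma hw_isHurwitz (j : (Fin 4 → ℤ) × Bool) : IsHurwitz (hw j) := by
  rcases j with ⟨v, b⟩
  cases b
  · exact Or.inl ⟨v 0, v 1, v 2, v 3, by simp [hw], by simp [hw], by simp [hw], by simp [hw]⟩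
  · exact Or.inr ⟨v 0, v 1, v 2, v 3, by simp [hw], by simp [hw], by simp [hw], by simp [hw]⟩

/-- The finite search set for Hurwitz integers with coordinates bounded by `A`. -/
noncomputable def hwF (A : ℤ) : Finset ((Fin 4 → ℤ) × Bool) :=
  (Fintype.piFinset fun _ => Finset.Icc (-A) A) ×ˢ Finset.univ

lemma card_hwF (A : ℤ) (hA : 0 ≤ A) : ((hwF A).card : ℝ) = 2 * ((2*A+1 : ℤ) : ℝ)^4 := by
  rw [hwF, Finset.card_product, Fintype.card_piFinset]
  simp only [Int.card_Icc, Finset.card_univ, Fintype.card_bool, Finset.prod_const,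
    Finset.card_univ, Fintype.card_fin]
  have h1 : (A + 1 - -A) = 2*A+1 := by ring
  rw [h1]
  have h2 : ((2*A+1).toNat : ℝ) = 2*(A:ℝ)+1 := by
    have h3 := Int.toNat_of_nonneg (by omega : (0:ℤ) ≤ 2*A+1)
    have h4 := congrArg (Int.cast : ℤ → ℝ) h3
    push_cast at h4 ⊢
    linarith
  push_cast
  rw [h2]
  push_cast
  ring

lemma exists_hw {x : Quaternion ℝ} {R : ℝ} (hx : IsHurwitz x) (hR : ‖x‖ ≤ R) :
    ∃ j ∈ hwF (⌈R⌉ + 1), hw j = x := by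
  have hco := coord_le_norm x
  have hR0 : (0:ℝ) ≤ R := le_trans (norm_nonneg x) hR
  have hAR : R ≤ (⌈R⌉ : ℝ) + 1 := by linarith [Int.le_ceil R]
  obtain ⟨a,b,c,d,h1,h2,h3,h4⟩ | ⟨a,b,c,d,h1,h2,h3,h4⟩ := hx
  · refine ⟨⟨![a,b,c,d], false⟩, ?_, ?_⟩
    · rw [hwF, Finset.mem_product]
      refine ⟨Fintype.mem_piFinset.mpr fun i => ?_, Finset.mem_univ _⟩
      rw [Finset.mem_Icc]
      have key : ∀ e : ℤ, |(e:ℝ)| ≤ R → (-(⌈R⌉+1) ≤ e ∧ e ≤ ⌈R⌉+1) := by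
        intro e he
        rw [abs_le] at he
        constructor
        · exact_mod_cast (show ((-(⌈R⌉+1):ℤ):ℝ) ≤ (e:ℝ) by push_cast; linarith)
        · exact_mod_cast (show ((e:ℝ)) ≤ (((⌈R⌉+1):ℤ):ℝ) by push_cast; linarith)
      fin_cases i
      · exact key a (by rw [← h1]; exact le_trans hco.1 hR)
      · exact key b (by rw [← h2]; exact le_trans hco.2.1 hR)
      · exact key c (by rw [← h3]; exact le_trans hco.2.2.1 hR)
      · exact key d (by rw [← h4]; exact le_trans hco.2.2.2 hR)
    · ext <;> simp [hw, h1, h2, h3, h4]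
  · refine ⟨⟨![a,b,c,d], true⟩, ?_, ?_⟩
    · rw [hwF, Finset.mem_product]
      refine ⟨Fintype.mem_piFinset.mpr fun i => ?_, Finset.mem_univ _⟩
      rw [Finset.mem_Icc]
      have key : ∀ e : ℤ, |(e:ℝ) + 1/2| ≤ R → (-(⌈R⌉+1) ≤ e ∧ e ≤ ⌈R⌉+1) := by
        intro e he
        rw [abs_le] at he
        have hl : (-(⌈R⌉+1) - 1 : ℤ) < e := by
          exact_mod_cast (show (((-(⌈R⌉+1) - 1):ℤ):ℝ) < (e:ℝ) by push_cast; linarith)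
        have hu : e < (⌈R⌉+1) + 1 := by
          exact_mod_cast (show ((e:ℝ)) < ((((⌈R⌉+1)+1):ℤ):ℝ) by push_cast; linarith)
        omega
      fin_cases i
      · exact key a (by rw [← h1]; exact le_trans hco.1 hR)
      · exact key b (by rw [← h2]; exact le_trans hco.2.1 hR)
      · exact key c (by rw [← h3]; exact le_trans hco.2.2.1 hR)
      · exact key d (by rw [← h4]; exact le_trans hco.2.2.2 hR)
    · ext <;> simp [hw, h1, h2, h3, h4]

lemma vol_biUnion_le (G : Finset ((Fin 4 → ℤ) × Bool)) (P : Set (Quaternion ℝ))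
    (f : Quaternion ℝ → Set (Quaternion ℝ)) (hP : ∀ y ∈ P, ∃ j ∈ G, hw j = y)
    {b : ℝ} (hb : 0 ≤ b) (hbd : ∀ j ∈ G, volume (f (hw j)) ≤ ENNReal.ofReal b) :
    volume (⋃ y ∈ P, f y) ≤ ENNReal.ofReal (G.card * b) := by
  have hsub : (⋃ y ∈ P, f y) ⊆ ⋃ j ∈ G, f (hw j) := by
    intro z hz
    simp only [mem_iUnion] at hz ⊢
    obtain ⟨y, hy, hzy⟩ := hz
    obtain ⟨j, hj, hjy⟩ := hP y hy
    exact ⟨j, hj, by rw [hjy]; exact hzy⟩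
  calc volume (⋃ y ∈ P, f y) ≤ volume (⋃ j ∈ G, f (hw j)) := measure_mono hsub
    _ ≤ ∑ j ∈ G, volume (f (hw j)) := measure_biUnion_finset_le G _
    _ ≤ ∑ _j ∈ G, ENNReal.ofReal b := Finset.sum_le_sum hbd
    _ = G.card * ENNReal.ofReal b := by rw [Finset.sum_const, nsmul_eq_mul]
    _ = ENNReal.ofReal (G.card * b) := by
        rw [ENNReal.ofReal_mul (by positivity), ENNReal.ofReal_natCast]

/-- Per-denominator bound: the measure of the union of balls of radius `2/(M‖q‖)` around
`p q⁻¹` over Hurwitz `p` with `‖p‖ ≤ 4‖q‖` is at most `C₀/M⁴`. -/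
lemma vol_Sq_le (M : ℝ) (hM : 1 ≤ M) (q : Quaternion ℝ) (hq : IsHurwitz q) :
    volume (⋃ p ∈ {p : Quaternion ℝ | IsHurwitz p ∧ ‖p‖ ≤ 4*‖q‖},
      closedBall (p * q⁻¹) (2/(M*‖q‖))) ≤ ENNReal.ofReal (14623232 / M^4) := by
  rcases eq_or_ne q 0 with rfl | hq0
  · -- q = 0 : radius is 0 and the measure vanishes
    have h0 : (2 : ℝ)/(M*‖(0 : Quaternion ℝ)‖) = 0 := by simp
    rw [h0]
    have := vol_biUnion_le (hwF 1) {p : Quaternion ℝ | IsHurwitz p ∧ ‖p‖ ≤ 4*‖(0:Quaternion ℝ)‖}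
      (fun p => closedBall (p * (0:Quaternion ℝ)⁻¹) 0) ?_ (le_refl (0:ℝ)) ?_
    · refine le_trans this ?_
      rw [mul_zero, ENNReal.ofReal_zero]; exact zero_le
    · intro y hy
      obtain ⟨hy1, hy2⟩ := hy
      have : ‖y‖ ≤ (0:ℝ) := by simpa using hy2
      have h1 : (0:ℝ) ≤ 0 := le_refl _
      have := exists_hw hy1 this
      simpa using this
    · intro j _
      refine le_trans (vol_closedBall_le _ 0 (le_refl 0)) ?_
      simp
  · have hq1 : 1 ≤ ‖q‖ := hq.one_le_norm hq0
    have hqpos : 0 < ‖q‖ := by linarith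
    have hMq : 0 < M * ‖q‖ := by positivity
    set A : ℤ := ⌈4*‖q‖⌉ + 1 with hA
    have hApos : (0:ℤ) ≤ A := by
      have : (0:ℝ) ≤ 4*‖q‖ := by positivity
      have := Int.ceil_nonneg this
      omega
    have hcard : ((hwF A).card : ℝ) = 2 * ((2*A+1 : ℤ) : ℝ)^4 := card_hwF A hApos
    have hbd : ((2*A+1 : ℤ) : ℝ) ≤ 13*‖q‖ := by
      have h1 : ((A:ℤ) : ℝ) ≤ 4*‖q‖ + 2 := by
        rw [hA]; push_cast
        linarith [Int.ceil_lt_add_one (4*‖q‖)]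
      push_cast at h1 ⊢
      linarith
    have hrad : (0:ℝ) ≤ 2/(M*‖q‖) := by positivity
    have := vol_biUnion_le (hwF A) {p : Quaternion ℝ | IsHurwitz p ∧ ‖p‖ ≤ 4*‖q‖}
      (fun p => closedBall (p * q⁻¹) (2/(M*‖q‖))) ?_
      (b := (2*(2/(M*‖q‖)))^4) (by positivity) ?_
    · refine le_trans this (ENNReal.ofReal_le_ofReal ?_)
      rw [hcard]
      have hMpos : (0:ℝ) < M := lt_of_lt_of_le zero_lt_one hM
      have h2 : ((2*A+1 : ℤ) : ℝ)^4 ≤ 28561 * ‖q‖^4 := by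
        have := pow_le_pow_left₀ (by positivity) hbd 4
        calc ((2*A+1 : ℤ) : ℝ)^4 ≤ (13*‖q‖)^4 := this
          _ = 28561 * ‖q‖^4 := by ring
      have e2 : 2 * ((2*A+1:ℤ):ℝ)^4 * (2*(2/(M*‖q‖)))^4
          = (512 * ((2*A+1:ℤ):ℝ)^4 / ‖q‖^4) / M^4 := by
        field_simp
        ring
      rw [e2, div_le_div_iff_of_pos_right (pow_pos hMpos 4), div_le_iff₀ (pow_pos hqpos 4)]
      nlinarith [pow_nonneg (norm_nonneg q) 4]
    · intro y hy
      exact exists_hw hy.1 hy.2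
    · intro j _
      exact vol_closedBall_le _ _ hrad

lemma hw_inj : Function.Injective hw := by
  rintro ⟨v, b⟩ ⟨v', b'⟩ h
  have h0 := congrArg QuaternionAlgebra.re h
  have h1 := congrArg QuaternionAlgebra.imI h
  have h2 := congrArg QuaternionAlgebra.imJ h
  have h3 := congrArg QuaternionAlgebra.imK h
  simp only [hw] at h0 h1 h2 h3
  cases b <;> cases b' <;> simp only [if_true, if_false, Bool.false_eq_true] at h0 h1 h2 h3 ⊢
  · simp only [add_zero] at h0 h1 h2 h3
    have e0 : v 0 = v' 0 := by exact_mod_cast h0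
    have e1 : v 1 = v' 1 := by exact_mod_cast h1
    have e2 : v 2 = v' 2 := by exact_mod_cast h2
    have e3 : v 3 = v' 3 := by exact_mod_cast h3
    have : v = v' := by
      funext i; fin_cases i <;> assumption
    rw [this]
  · exfalso
    have : (2 * v 0 : ℤ) = 2 * v' 0 + 1 := by
      have : ((2 * v 0 : ℤ) : ℝ) = ((2 * v' 0 + 1 : ℤ) : ℝ) := by push_cast; linarith
      exact_mod_cast this
    omega
  · exfalso
    have : (2 * v 0 + 1 : ℤ) = 2 * v' 0 := by
      have : ((2 * v 0 + 1 : ℤ) : ℝ) = ((2 * v' 0 : ℤ) : ℝ) := by push_cast; linarith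
      exact_mod_cast this
    omega
  · simp only [add_left_inj] at h0 h1 h2 h3
    have e0 : v 0 = v' 0 := by exact_mod_cast h0
    have e1 : v 1 = v' 1 := by exact_mod_cast h1
    have e2 : v 2 = v' 2 := by exact_mod_cast h2
    have e3 : v 3 = v' 3 := by exact_mod_cast h3
    have : v = v' := by
      funext i; fin_cases i <;> assumption
    rw [this]

lemma fract_close {M : ℕ} (hM : 1 ≤ M) {a b : ℝ}
    (h : ⌊(M:ℝ) * Int.fract a⌋ = ⌊(M:ℝ) * Int.fract b⌋) :
    |Int.fract a - Int.fract b| < 1 / M := by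
  have hMpos : (0:ℝ) < M := by exact_mod_cast hM
  have h1 : |(M:ℝ) * Int.fract a - (M:ℝ) * Int.fract b| < 1 :=
    Int.abs_sub_lt_one_of_floor_eq_floor h
  rw [abs_lt] at h1 ⊢
  constructor
  · rw [neg_lt, ← neg_sub]
    rw [lt_div_iff₀ hMpos]
    nlinarith [h1.1]
  · rw [lt_div_iff₀ hMpos]
    nlinarith [h1.2]

/-- Quaternionic Dirichlet-type theorem via pigeonhole. -/
lemma dirichlet (ξ : Quaternion ℝ) (M : ℕ) (hM : 1 ≤ M) :
    ∃ p q : Quaternion ℝ, IsHurwitz p ∧ IsHurwitz q ∧ q ≠ 0 ∧ ‖q‖ ≤ 2*M - 1 ∧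
      ‖ξ * q - p‖ < 2 / M := by
  classical
  have hMpos : (0:ℝ) < M := by exact_mod_cast hM
  set D : Finset ((Fin 4 → ℤ) × Bool) :=
    (Fintype.piFinset fun _ => Finset.Icc (0:ℤ) (M-1)) ×ˢ Finset.univ with hD
  set B : Finset (Fin 4 → ℤ) := Fintype.piFinset fun _ => Finset.Icc (0:ℤ) (M-1) with hB
  have cardD : D.card = 2 * M^4 := by
    rw [hD, Finset.card_product, Fintype.card_piFinset]
    simp [Int.card_Icc]
    ring
  have cardB : B.card = M^4 := by
    rw [hB, Fintype.card_piFinset]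
    simp [Int.card_Icc]
  set φ : ((Fin 4 → ℤ) × Bool) → (Fin 4 → ℤ) := fun j =>
    ![⌊(M:ℝ) * Int.fract ((ξ * hw j).re)⌋, ⌊(M:ℝ) * Int.fract ((ξ * hw j).imI)⌋,
      ⌊(M:ℝ) * Int.fract ((ξ * hw j).imJ)⌋, ⌊(M:ℝ) * Int.fract ((ξ * hw j).imK)⌋] with hφ
  have hmaps : ∀ j ∈ D, φ j ∈ B := by
    intro j _
    rw [hB, Fintype.mem_piFinset]
    intro i
    have key : ∀ a : ℝ, ⌊(M:ℝ) * Int.fract a⌋ ∈ Finset.Icc (0:ℤ) (M-1) := by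
      intro a
      rw [Finset.mem_Icc]
      constructor
      · exact Int.floor_nonneg.mpr (mul_nonneg (le_of_lt hMpos) (Int.fract_nonneg a))
      · have : (M:ℝ) * Int.fract a < M := by
          nlinarith [Int.fract_lt_one a, Int.fract_nonneg a]
        have := Int.floor_lt.mpr (by exact_mod_cast this : (M:ℝ) * Int.fract a < ((M:ℤ):ℝ))
        omega
    fin_cases i <;> exact key _
  have hlt : B.card < D.card := by
    rw [cardB, cardD]
    have : 0 < M^4 := by positivity
    omega
  obtain ⟨j, hj, j', hj', hne, heq⟩ := Finset.exists_ne_map_eq_of_card_lt_of_maps_to hlt hmaps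
  set y : Quaternion ℝ := ξ * hw j with hy
  set y' : Quaternion ℝ := ξ * hw j' with hy'
  set q : Quaternion ℝ := hw j - hw j' with hq
  set p : Quaternion ℝ := hw (⟨![⌊y.re⌋ - ⌊y'.re⌋, ⌊y.imI⌋ - ⌊y'.imI⌋,
    ⌊y.imJ⌋ - ⌊y'.imJ⌋, ⌊y.imK⌋ - ⌊y'.imK⌋], false⟩) with hp
  refine ⟨p, q, hw_isHurwitz _, (hw_isHurwitz j).sub (hw_isHurwitz j'), ?_, ?_, ?_⟩
  · rw [hq, sub_ne_zero]
    exact fun h => hne (hw_inj h)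
  · -- norm bound on q
    have hcoord : ∀ (jj : (Fin 4 → ℤ) × Bool), jj ∈ D → ∀ i : Fin 4,
        0 ≤ (jj.1 i : ℝ) ∧ (jj.1 i : ℝ) ≤ (M:ℝ) - 1 := by
      intro jj hjj i
      rw [hD, Finset.mem_product] at hjj
      have := Fintype.mem_piFinset.mp hjj.1 i
      rw [Finset.mem_Icc] at this
      constructor
      · exact_mod_cast this.1
      · have : (jj.1 i : ℝ) ≤ (((M:ℤ) - 1 : ℤ) : ℝ) := by exact_mod_cast this.2
        push_cast at this
        linarith
    have hbnd : ∀ (jj : (Fin 4 → ℤ) × Bool), jj ∈ D →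
        (0 ≤ (hw jj).re ∧ (hw jj).re ≤ (M:ℝ) - 1/2) ∧
        (0 ≤ (hw jj).imI ∧ (hw jj).imI ≤ (M:ℝ) - 1/2) ∧
        (0 ≤ (hw jj).imJ ∧ (hw jj).imJ ≤ (M:ℝ) - 1/2) ∧
        (0 ≤ (hw jj).imK ∧ (hw jj).imK ≤ (M:ℝ) - 1/2) := by
      intro jj hjj
      have h0 := hcoord jj hjj 0
      have h1 := hcoord jj hjj 1
      have h2 := hcoord jj hjj 2
      have h3 := hcoord jj hjj 3
      have hite : (0:ℝ) ≤ (if jj.2 then (1:ℝ)/2 else 0) ∧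
          (if jj.2 then (1:ℝ)/2 else 0) ≤ 1/2 := by split <;> norm_num
      refine ⟨⟨?_, ?_⟩, ⟨?_, ?_⟩, ⟨?_, ?_⟩, ⟨?_, ?_⟩⟩ <;>
        simp only [hw] <;> linarith [hite.1, hite.2]
    obtain ⟨b1, b2, b3, b4⟩ := hbnd j hj
    obtain ⟨c1, c2, c3, c4⟩ := hbnd j' hj'
    have hs : (0:ℝ) ≤ (M:ℝ) - 1/2 := by linarith
    have hqre : q.re = (hw j).re - (hw j').re := by rw [hq]; rfl
    have hqi : q.imI = (hw j).imI - (hw j').imI := by rw [hq]; rfl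
    have hqj : q.imJ = (hw j).imJ - (hw j').imJ := by rw [hq]; rfl
    have hqk : q.imK = (hw j).imK - (hw j').imK := by rw [hq]; rfl
    have := norm_le_of_coords (z := q) hs ?_ ?_ ?_ ?_
    · linarith
    · rw [hqre, abs_le]
      exact ⟨by linarith [b1.1, b1.2, c1.1, c1.2], by linarith [b1.1, b1.2, c1.1, c1.2]⟩
    · rw [hqi, abs_le]
      exact ⟨by linarith [b2.1, b2.2, c2.1, c2.2], by linarith [b2.1, b2.2, c2.1, c2.2]⟩
    · rw [hqj, abs_le]
      exact ⟨by linarith [b3.1, b3.2, c3.1, c3.2], by linarith [b3.1, b3.2, c3.1, c3.2]⟩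
    · rw [hqk, abs_le]
      exact ⟨by linarith [b4.1, b4.2, c4.1, c4.2], by linarith [b4.1, b4.2, c4.1, c4.2]⟩
  · -- approximation bound
    have hqeq : ξ * q = y - y' := by rw [hq, mul_sub]
    have hz1 : (ξ * q - p).re = Int.fract y.re - Int.fract y'.re := by
      rw [hqeq]
      simp only [hp, hw, Quaternion.re_sub, Int.fract]
      show y.re - y'.re - ((((⌊y.re⌋ - ⌊y'.re⌋ : ℤ)) : ℝ) + 0) = _
      push_cast
      ring
    have hz2 : (ξ * q - p).imI = Int.fract y.imI - Int.fract y'.imI := by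
      rw [hqeq]
      simp only [hp, hw, Quaternion.imI_sub, Int.fract]
      show y.imI - y'.imI - ((((⌊y.imI⌋ - ⌊y'.imI⌋ : ℤ)) : ℝ) + 0) = _
      push_cast
      ring
    have hz3 : (ξ * q - p).imJ = Int.fract y.imJ - Int.fract y'.imJ := by
      rw [hqeq]
      simp only [hp, hw, Quaternion.imJ_sub, Int.fract]
      show y.imJ - y'.imJ - ((((⌊y.imJ⌋ - ⌊y'.imJ⌋ : ℤ)) : ℝ) + 0) = _
      push_cast
      ring
    have hz4 : (ξ * q - p).imK = Int.fract y.imK - Int.fract y'.imK := by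
      rw [hqeq]
      simp only [hp, hw, Quaternion.imK_sub, Int.fract]
      show y.imK - y'.imK - ((((⌊y.imK⌋ - ⌊y'.imK⌋ : ℤ)) : ℝ) + 0) = _
      push_cast
      ring
    have hc1 : |Int.fract y.re - Int.fract y'.re| < 1/M :=
      fract_close hM (congrFun heq 0)
    have hc2 : |Int.fract y.imI - Int.fract y'.imI| < 1/M :=
      fract_close hM (congrFun heq 1)
    have hc3 : |Int.fract y.imJ - Int.fract y'.imJ| < 1/M :=
      fract_close hM (congrFun heq 2)
    have hc4 : |Int.fract y.imK - Int.fract y'.imK| < 1/M :=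
      fract_close hM (congrFun heq 3)
    have hsq : ‖ξ * q - p‖^2 < (2/M)^2 := by
      rw [norm_sq_eq, hz1, hz2, hz3, hz4]
      have e1 := sq_lt_sq' (abs_lt.mp hc1).1 (abs_lt.mp hc1).2
      have e2 := sq_lt_sq' (abs_lt.mp hc2).1 (abs_lt.mp hc2).2
      have e3 := sq_lt_sq' (abs_lt.mp hc3).1 (abs_lt.mp hc3).2
      have e4 := sq_lt_sq' (abs_lt.mp hc4).1 (abs_lt.mp hc4).2
      have : (2/(M:ℝ))^2 = 4 * (1/M)^2 := by ring
      rw [this]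
      linarith
    have h2M : (0:ℝ) < 2/M := by positivity
    nlinarith [norm_nonneg (ξ * q - p), hsq, h2M]

lemma vol_bad_le (M : ℝ) (hM : 1 ≤ M) (T : ℝ) (hT : 1 ≤ T) :
    volume (⋃ q ∈ {q : Quaternion ℝ | IsHurwitz q ∧ ‖q‖ ≤ T},
      ⋃ p ∈ {p : Quaternion ℝ | IsHurwitz p ∧ ‖p‖ ≤ 4*‖q‖},
        closedBall (p * q⁻¹) (2/(M*‖q‖))) ≤
      ENNReal.ofReal (4802 * T^4 * (14623232 / M^4)) := by
  have hb : (0:ℝ) ≤ 14623232 / M^4 := by positivity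
  have := vol_biUnion_le (hwF (⌈T⌉+1)) {q : Quaternion ℝ | IsHurwitz q ∧ ‖q‖ ≤ T}
    (fun q => ⋃ p ∈ {p : Quaternion ℝ | IsHurwitz p ∧ ‖p‖ ≤ 4*‖q‖},
      closedBall (p * q⁻¹) (2/(M*‖q‖)))
    (fun y hy => exists_hw hy.1 hy.2) hb
    (fun j _ => vol_Sq_le M hM (hw j) (hw_isHurwitz j))
  refine le_trans this (ENNReal.ofReal_le_ofReal ?_)
  have hA : (0:ℤ) ≤ ⌈T⌉+1 := by
    have := Int.ceil_nonneg (le_trans zero_le_one hT)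
    omega
  have hcard := card_hwF (⌈T⌉+1) hA
  rw [hcard]
  have h1 : ((2*(⌈T⌉+1)+1 : ℤ) : ℝ) ≤ 7*T := by
    push_cast
    have := Int.ceil_lt_add_one T
    push_cast at this
    linarith
  have h2 : ((2*(⌈T⌉+1)+1 : ℤ) : ℝ)^4 ≤ (7*T)^4 :=
    pow_le_pow_left₀ (by push_cast; positivity) h1 4
  have h3 : (7*T)^4 = 2401*T^4 := by ring
  nlinarith [hb, pow_nonneg (le_trans zero_le_one hT) 4]

lemma norm_le_two_of_fundDomCl {ξ : Quaternion ℝ} (h : ξ ∈ fundDomCl) : ‖ξ‖ ≤ 2 := by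
  obtain ⟨h1, h2, h3, h4, h5, h6, h7, h8⟩ := h
  have := norm_le_of_coords (z := ξ) (s := 1) zero_le_one
    (abs_le.mpr ⟨by linarith, by linarith⟩) (abs_le.mpr ⟨by linarith, by linarith⟩)
    (abs_le.mpr ⟨by linarith, by linarith⟩) (abs_le.mpr ⟨by linarith, by linarith⟩)
  linarith

/-- The Hurwitz rationals form a ubiquitous system in `Δ̄` with respect to
`ρ(N) = 2/(η(N)^{1/4} N²)`: every ball `B₀ ⊆ Δ̄` is at least half covered in measure by
the `ρ(N)`-neighbourhoods of the Hurwitz rationals with denominator of norm at most `N`,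
for all sufficiently large `N`. -/
theorem hurwitz_rationals_ubiquitous (η : ℕ → ℝ)
    (hηIcc : ∀ m, η m ∈ Set.Icc (0 : ℝ) 1) (hηanti : Antitone η)
    (hη0 : Tendsto η atTop (nhds 0))
    (hgrow : Tendsto (fun m : ℕ => (m : ℝ) * η m ^ ((1 : ℝ) / 4)) atTop atTop)
    (x : Quaternion ℝ) (r : ℝ) (hr : 0 < r) (hball : closedBall x r ⊆ fundDomCl) :
    ∃ N₀ : ℕ, ∀ N : ℕ, N₀ ≤ N →
      volume (closedBall x r) / 2 ≤
        volume (closedBall x r ∩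
          ⋃ q ∈ {q : Quaternion ℝ | IsHurwitz q ∧ 1 ≤ ‖q‖ ∧ ‖q‖ ≤ N},
            ⋃ p ∈ {p : Quaternion ℝ | IsHurwitz p},
              ball (p * q⁻¹) (2 / (η N ^ ((1 : ℝ) / 4) * (N : ℝ) ^ 2))) := by
  classical
  set K : ℝ := 4802 * 14623232 * 65536 with hK
  have hKpos : (0:ℝ) < K := by rw [hK]; norm_num
  -- η is everywhere positive
  have hηpos : ∀ m, 0 < η m := by
    intro m
    rcases lt_or_eq_of_le (hηIcc m).1 with h | h
    · exact h
    · exfalso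
      have hm0 : η m = 0 := h.symm
      have hzero : ∀ n, m ≤ n → η n = 0 := by
        intro n hn
        have h1 : η n ≤ η m := hηanti hn
        have h2 : 0 ≤ η n := (hηIcc n).1
        linarith
      have h1 : ∀ᶠ n : ℕ in atTop, (1:ℝ) ≤ (n:ℝ) * η n ^ ((1:ℝ)/4) :=
        hgrow.eventually (eventually_ge_atTop 1)
      obtain ⟨n, hn1, hn2⟩ := ((eventually_ge_atTop m).and h1).exists
      rw [hzero n hn1, Real.zero_rpow (by norm_num : (1:ℝ)/4 ≠ 0), mul_zero] at hn2
      linarith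
  -- eventual conditions
  have E1 : ∀ᶠ N in atTop, 2 ≤ N := eventually_ge_atTop 2
  have E2 : ∀ᶠ N : ℕ in atTop, (1:ℝ) ≤ (N:ℝ) * η N ^ ((1:ℝ)/4) :=
    hgrow.eventually (eventually_ge_atTop 1)
  have E3 : ∀ᶠ N : ℕ in atTop, η N < r^4/(2*K) :=
    hη0.eventually_lt_const (by positivity)
  obtain ⟨N₀, hN₀⟩ := eventually_atTop.mp ((E1.and E2).and E3)
  refine ⟨N₀, fun N hN => ?_⟩
  obtain ⟨⟨hN2, hNw⟩, hNsmall⟩ := hN₀ N hN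
  set κ : ℝ := η N ^ ((1:ℝ)/4) with hκ
  have hκpos : 0 < κ := Real.rpow_pos_of_pos (hηpos N) _
  have hκ4 : κ^4 = η N := by
    rw [hκ, ← Real.rpow_natCast (η N ^ ((1:ℝ)/4)) 4, ← Real.rpow_mul (hηIcc N).1]
    norm_num
  set M : ℕ := N / 2 with hMdef
  have hM1 : 1 ≤ M := by omega
  have hMr : (1:ℝ) ≤ (M:ℝ) := by exact_mod_cast hM1
  have hMN : 2 * M ≤ N := by omega
  have h4M : N ≤ 4 * M := by omega
  have hMNr : 2*(M:ℝ) ≤ (N:ℝ) := by exact_mod_cast hMN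
  have h4Mr : (N:ℝ) ≤ 4*(M:ℝ) := by exact_mod_cast h4M
  have hNpos : (0:ℝ) < N := by positivity
  set T : ℝ := 4 * ((N:ℝ) * κ) with hT
  have hT1 : 1 ≤ T := by rw [hT]; nlinarith
  -- the bad set
  set Bad : Set (Quaternion ℝ) := ⋃ q ∈ {q : Quaternion ℝ | IsHurwitz q ∧ ‖q‖ ≤ T},
      ⋃ p ∈ {p : Quaternion ℝ | IsHurwitz p ∧ ‖p‖ ≤ 4*‖q‖},
        closedBall (p * q⁻¹) (2/((M:ℝ)*‖q‖)) with hBad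
  set Good : Set (Quaternion ℝ) := ⋃ q ∈ {q : Quaternion ℝ | IsHurwitz q ∧ 1 ≤ ‖q‖ ∧ ‖q‖ ≤ N},
      ⋃ p ∈ {p : Quaternion ℝ | IsHurwitz p},
        ball (p * q⁻¹) (2 / (η N ^ ((1 : ℝ) / 4) * (N : ℝ) ^ 2)) with hGood
  -- covering
  have hcover : closedBall x r ⊆ (closedBall x r ∩ Good) ∪ Bad := by
    intro ξ hξ
    obtain ⟨p, q, hp, hq, hq0, hqnorm, happ⟩ := dirichlet ξ M hM1
    have hq1 : 1 ≤ ‖q‖ := hq.one_le_norm hq0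
    have hqpos : 0 < ‖q‖ := by linarith
    have hqN : ‖q‖ ≤ (N:ℝ) := by linarith
    have hfact : ξ - p * q⁻¹ = (ξ*q - p) * q⁻¹ := by
      rw [sub_mul, mul_assoc, mul_inv_cancel₀ hq0, mul_one]
    have happ2 : ‖ξ - p * q⁻¹‖ < 2/((M:ℝ)*‖q‖) := by
      rw [hfact, norm_mul, norm_inv]
      have he : 2/((M:ℝ)*‖q‖) = (2/(M:ℝ)) * ‖q‖⁻¹ := by
        field_simp
      rw [he]
      exact mul_lt_mul_of_pos_right happ (by positivity)
    by_cases hcase : T ≤ ‖q‖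
    · left
      refine ⟨hξ, ?_⟩
      rw [hGood]
      refine mem_iUnion₂.mpr ⟨q, ⟨hq, hq1, hqN⟩, mem_iUnion₂.mpr ⟨p, hp, ?_⟩⟩
      rw [mem_ball, dist_eq_norm]
      refine lt_of_lt_of_le happ2 ?_
      have hd : κ * (N:ℝ)^2 ≤ (M:ℝ)*‖q‖ := by
        have h1 : (M:ℝ)*T ≤ (M:ℝ)*‖q‖ :=
          mul_le_mul_of_nonneg_left hcase (by linarith)
        have h2 : κ * (N:ℝ)^2 ≤ (M:ℝ)*T := by
          rw [hT]
          nlinarith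
        linarith
      exact div_le_div_of_nonneg_left (by norm_num) (by positivity) hd
    · right
      rw [hBad]
      push_neg at hcase
      have hξ2 : ‖ξ‖ ≤ 2 := norm_le_two_of_fundDomCl (hball hξ)
      have hrad2 : 2/((M:ℝ)*‖q‖) ≤ 2 := by
        rw [div_le_iff₀ (by positivity)]
        nlinarith
      have hpq4 : ‖p * q⁻¹‖ ≤ 4 := by
        have h1 : p * q⁻¹ = ξ - (ξ - p * q⁻¹) := (sub_sub_cancel _ _).symm
        rw [h1]
        calc ‖ξ - (ξ - p * q⁻¹)‖ ≤ ‖ξ‖ + ‖ξ - p * q⁻¹‖ := norm_sub_le _ _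
          _ ≤ 2 + 2 := add_le_add hξ2 (le_trans (le_of_lt happ2) hrad2)
          _ = 4 := by norm_num
      have hpnorm : ‖p‖ ≤ 4*‖q‖ := by
        have h1 : p = (p * q⁻¹) * q := by
          rw [mul_assoc, inv_mul_cancel₀ hq0, mul_one]
        rw [h1, norm_mul]
        exact mul_le_mul_of_nonneg_right hpq4 (norm_nonneg q)
      refine mem_iUnion₂.mpr ⟨q, ⟨hq, le_of_lt hcase⟩, mem_iUnion₂.mpr ⟨p, ⟨hp, hpnorm⟩, ?_⟩⟩
      rw [mem_closedBall, dist_eq_norm]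
      exact le_of_lt happ2
  -- measure of the bad set
  have hbad : volume Bad ≤ ENNReal.ofReal (r^4/2) := by
    refine le_trans (vol_bad_le (M:ℝ) hMr T hT1) (ENNReal.ofReal_le_ofReal ?_)
    have hT4 : T^4 = 256*(N:ℝ)^4*(η N) := by
      have e : T^4 = 256*(N:ℝ)^4*κ^4 := by rw [hT]; ring
      rw [e, hκ4]
    have hN4 : (N:ℝ)^4 ≤ 256*(M:ℝ)^4 := by
      have := pow_le_pow_left₀ (le_of_lt hNpos) h4Mr 4
      calc (N:ℝ)^4 ≤ (4*(M:ℝ))^4 := this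
        _ = 256*(M:ℝ)^4 := by ring
    have hM4pos : (0:ℝ) < (M:ℝ)^4 := by positivity
    have e2 : 4802 * T^4 * (14623232 / (M:ℝ)^4)
        = (4802*256*14623232*(η N))*((N:ℝ)^4/(M:ℝ)^4) := by
      rw [hT4]
      field_simp
    rw [e2]
    have h3 : (N:ℝ)^4/(M:ℝ)^4 ≤ 256 := by
      rw [div_le_iff₀ hM4pos]
      linarith
    calc (4802*256*14623232*(η N))*((N:ℝ)^4/(M:ℝ)^4)
        ≤ (4802*256*14623232*(η N))*256 := by
          apply mul_le_mul_of_nonneg_left h3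
          have := (hηpos N).le
          positivity
      _ = K * η N := by rw [hK]; ring
      _ ≤ r^4/2 := by
          have h5 : K * η N ≤ K * (r^4/(2*K)) :=
            mul_le_mul_of_nonneg_left (le_of_lt hNsmall) (le_of_lt hKpos)
          have e5 : K * (r^4/(2*K)) = r^4/2 := by
            field_simp
          linarith
  -- finish with measure arithmetic
  have hμlow : ENNReal.ofReal (r^4) ≤ volume (closedBall x r) :=
    vol_closedBall_ge x r (le_of_lt hr)
  have hμfin : volume (closedBall x r) ≠ ⊤ :=
    ne_top_of_le_ne_top (by exact ENNReal.ofReal_ne_top)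
      (vol_closedBall_le x r (le_of_lt hr))
  have hbadhalf : volume Bad ≤ volume (closedBall x r) / 2 := by
    refine le_trans hbad ?_
    have e1 : ENNReal.ofReal (r^4/2) = ENNReal.ofReal (r^4) / 2 := by
      rw [ENNReal.ofReal_div_of_pos (by norm_num), ENNReal.ofReal_ofNat]
    rw [e1]
    exact ENNReal.div_le_div_right hμlow 2
  have hchain : volume (closedBall x r) ≤ volume (closedBall x r ∩ Good) + volume (closedBall x r) / 2 := by
    calc volume (closedBall x r) ≤ volume ((closedBall x r ∩ Good) ∪ Bad) := measure_mono hcover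
      _ ≤ volume (closedBall x r ∩ Good) + volume Bad := measure_union_le _ _
      _ ≤ volume (closedBall x r ∩ Good) + volume (closedBall x r) / 2 :=
          add_le_add le_rfl hbadhalf
  have := tsub_le_iff_right.mpr hchain
  rw [ENNReal.sub_half hμfin] at this
  exact this
end

section
/- The set 𝔅_ℍ of badly approximable quaternions—those β for which there exists c(β) > 0 with |β − p·q⁻¹|₂ ≥ c(β)/|q|₂² for all Hurwitz integer pairs (p,q), q ≠ 0—has 4-dimensional Lebesgue measure zero. -/
open MeasureTheory Metric Filter Set Quaternion

/-- The set of badly approximable quaternions. -/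
def BadH : Set (Quaternion ℝ) :=
  {β | ∃ c : ℝ, 0 < c ∧ ∀ p q : Quaternion ℝ, IsHurwitz p → IsHurwitz q → q ≠ 0 →
    c / ‖q‖ ^ 2 ≤ ‖β - p * q⁻¹‖}

open scoped ENNReal NNReal Topology

namespace BadHZero
open Finset


lemma norm_sq_eq (x : Quaternion ℝ) : ‖x‖^2 = x.re^2 + x.imI^2 + x.imJ^2 + x.imK^2 := by
  rw [sq, ← Quaternion.normSq_eq_norm_mul_self, Quaternion.normSq_def']

lemma coord_abs_le_norm (x : Quaternion ℝ) :
    |x.re| ≤ ‖x‖ ∧ |x.imI| ≤ ‖x‖ ∧ |x.imJ| ≤ ‖x‖ ∧ |x.imK| ≤ ‖x‖ := by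
  have h := norm_sq_eq x
  have h0 : (0:ℝ) ≤ ‖x‖ := norm_nonneg x
  refine ⟨?_, ?_, ?_, ?_⟩ <;>
    [skip; skip; skip; skip] <;>
    nlinarith [sq_nonneg x.re, sq_nonneg x.imI, sq_nonneg x.imJ, sq_nonneg x.imK,
      abs_nonneg x.re, abs_nonneg x.imI, abs_nonneg x.imJ, abs_nonneg x.imK,
      sq_abs x.re, sq_abs x.imI, sq_abs x.imJ, sq_abs x.imK]

lemma norm_le_of_coords {x : Quaternion ℝ} {t : ℝ} (ht : 0 ≤ t)
    (h1 : |x.re| ≤ t) (h2 : |x.imI| ≤ t) (h3 : |x.imJ| ≤ t) (h4 : |x.imK| ≤ t) :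
    ‖x‖ ≤ 2 * t := by
  have h := norm_sq_eq x
  have h0 : (0:ℝ) ≤ ‖x‖ := norm_nonneg x
  nlinarith [sq_abs x.re, sq_abs x.imI, sq_abs x.imJ, sq_abs x.imK,
    abs_nonneg x.re, abs_nonneg x.imI, abs_nonneg x.imJ, abs_nonneg x.imK,
    sq_nonneg (|x.re|+|x.imI|), sq_nonneg (|x.imJ|+|x.imK|)]

lemma mk_hurwitz (a b c d : ℤ) : IsHurwitz ⟨(a:ℝ), (b:ℝ), (c:ℝ), (d:ℝ)⟩ :=
  Or.inl ⟨a, b, c, d, rfl, rfl, rfl, rfl⟩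

lemma half_int_sq (k : ℤ) : (1/4:ℝ) ≤ ((k:ℝ) + 1/2)^2 := by
  rcases le_or_gt 0 k with h | h
  · have : (0:ℝ) ≤ (k:ℝ) := by exact_mod_cast h
    nlinarith
  · have hk : k ≤ -1 := by omega
    have : (k:ℝ) ≤ -1 := by exact_mod_cast hk
    nlinarith

lemma one_le_norm_hurwitz {q : Quaternion ℝ} (hq : IsHurwitz q) (h0 : q ≠ 0) : 1 ≤ ‖q‖ := by
  have hn := norm_sq_eq q
  have hnn : (0:ℝ) ≤ ‖q‖ := norm_nonneg q
  have key : 1 ≤ ‖q‖^2 := by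
    rcases hq with ⟨a, b, c, d, ha, hb, hc, hd⟩ | ⟨a, b, c, d, ha, hb, hc, hd⟩
    · have : a ≠ 0 ∨ b ≠ 0 ∨ c ≠ 0 ∨ d ≠ 0 := by
        by_contra hcon
        push_neg at hcon
        obtain ⟨e1, e2, e3, e4⟩ := hcon
        apply h0
        apply Quaternion.ext <;> simp [ha, hb, hc, hd, e1, e2, e3, e4]
      have hsq : ∀ n : ℤ, n ≠ 0 → (1:ℝ) ≤ (n:ℝ)^2 := by
        intro n hn'
        have : 1 ≤ |n| := Int.one_le_abs hn'
        have : (1:ℝ) ≤ |(n:ℝ)| := by exact_mod_cast (by exact_mod_cast this : (1:ℝ) ≤ (|n|:ℝ))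
        nlinarith [abs_nonneg (n:ℝ), sq_abs (n:ℝ)]
      rw [ha, hb, hc, hd] at hn
      rcases this with h | h | h | h
      · have := hsq a h
        nlinarith [sq_nonneg ((b:ℝ)), sq_nonneg ((c:ℝ)), sq_nonneg ((d:ℝ))]
      · have := hsq b h
        nlinarith [sq_nonneg ((a:ℝ)), sq_nonneg ((c:ℝ)), sq_nonneg ((d:ℝ))]
      · have := hsq c h
        nlinarith [sq_nonneg ((a:ℝ)), sq_nonneg ((b:ℝ)), sq_nonneg ((d:ℝ))]
      · have := hsq d h
        nlinarith [sq_nonneg ((a:ℝ)), sq_nonneg ((b:ℝ)), sq_nonneg ((c:ℝ))]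
    · have h1 := half_int_sq a
      have h2 := half_int_sq b
      have h3 := half_int_sq c
      have h4 := half_int_sq d
      rw [ha, hb, hc, hd] at hn
      nlinarith
  nlinarith



/-- Dirichlet-type pigeonhole. -/
lemma dirichlet (β : Quaternion ℝ) (M : ℕ) (hM : 2 ≤ M) :
    ∃ p q : Quaternion ℝ, IsHurwitz p ∧ IsHurwitz q ∧ q ≠ 0 ∧
      ‖q‖ ≤ 2 * ((M:ℝ) - 1) ∧ ‖β * q - p‖ ≤ 2 / ((M:ℝ) - 1) := by
  classical
  set K : ℕ := M - 1 with hKdef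
  have hK1 : 1 ≤ K := by omega
  have hKR : (0:ℝ) < K := by exact_mod_cast hK1
  have hKM : (K:ℝ) = (M:ℝ) - 1 := by
    have : (K:ℕ) + 1 = M := by omega
    push_cast [← this]; ring
  -- the quaternion associated to a tuple
  let qq : ℕ × ℕ × ℕ × ℕ → Quaternion ℝ := fun v =>
    ⟨(v.1:ℝ), (v.2.1:ℝ), (v.2.2.1:ℝ), (v.2.2.2:ℝ)⟩
  -- box function
  let box : ℝ → ℕ := fun y => (⌊Int.fract y * K⌋).toNat
  have box_mem : ∀ y : ℝ, box y ∈ Finset.range K := by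
    intro y
    have h1 : Int.fract y * K < K := by
      have := Int.fract_lt_one y
      calc Int.fract y * K < 1 * K := by
            apply mul_lt_mul_of_pos_right this hKR
        _ = K := one_mul _
    have h0 : (0:ℤ) ≤ ⌊Int.fract y * K⌋ := by
      apply Int.floor_nonneg.2
      exact mul_nonneg (Int.fract_nonneg y) hKR.le
    have h2 : ⌊Int.fract y * K⌋ < (K:ℤ) := by
      apply Int.floor_lt.2
      exact_mod_cast h1
    simp only [box, Finset.mem_range]
    omega
  let g : ℕ × ℕ × ℕ × ℕ → ℕ × ℕ × ℕ × ℕ := fun v =>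
    (box (β * qq v).re, box (β * qq v).imI, box (β * qq v).imJ, box (β * qq v).imK)
  let D : Finset (ℕ × ℕ × ℕ × ℕ) :=
    (Finset.range M) ×ˢ (Finset.range M) ×ˢ (Finset.range M) ×ˢ (Finset.range M)
  let B : Finset (ℕ × ℕ × ℕ × ℕ) :=
    (Finset.range K) ×ˢ (Finset.range K) ×ˢ (Finset.range K) ×ˢ (Finset.range K)
  have hcard : B.card < D.card := by
    simp only [B, D, Finset.card_product, Finset.card_range]
    have : K < M := by omega
    calc K * (K * (K * K)) < M * (M * (M * M)) := by
          apply Nat.mul_lt_mul_of_lt_of_le this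
          apply Nat.mul_le_mul (le_of_lt this)
          exact Nat.mul_le_mul (le_of_lt this) (le_of_lt this)
          · positivity
        _ = M * (M * (M * M)) := rfl
  have hmaps : ∀ v ∈ D, g v ∈ B := by
    intro v _
    simp only [g, B, Finset.mem_product]
    exact ⟨box_mem _, box_mem _, box_mem _, box_mem _⟩
  obtain ⟨v1, hv1, v2, hv2, hne, heq⟩ := Finset.exists_ne_map_eq_of_card_lt_of_maps_to hcard hmaps
  -- box lemma
  have boxlem : ∀ y z : ℝ, box y = box z → |Int.fract y - Int.fract z| ≤ 1 / K := by
    intro y z hyz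
    have h0y : (0:ℤ) ≤ ⌊Int.fract y * K⌋ :=
      Int.floor_nonneg.2 (mul_nonneg (Int.fract_nonneg y) hKR.le)
    have h0z : (0:ℤ) ≤ ⌊Int.fract z * K⌋ :=
      Int.floor_nonneg.2 (mul_nonneg (Int.fract_nonneg z) hKR.le)
    have hfl : ⌊Int.fract y * K⌋ = ⌊Int.fract z * K⌋ := by
      simp only [box] at hyz
      omega
    have habs := Int.abs_sub_lt_one_of_floor_eq_floor hfl
    have : |Int.fract y - Int.fract z| * K < 1 := by
      calc |Int.fract y - Int.fract z| * K = |Int.fract y - Int.fract z| * |(K:ℝ)| := by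
            rw [abs_of_pos hKR]
        _ = |(Int.fract y - Int.fract z) * K| := (abs_mul _ _).symm
        _ = |Int.fract y * K - Int.fract z * K| := by ring_nf
        _ < 1 := habs
    rw [le_div_iff₀ hKR]
    exact this.le
  -- extract componentwise box equalities
  have heq1 : box (β * qq v1).re = box (β * qq v2).re := congrArg (fun w => w.1) heq
  have heq2 : box (β * qq v1).imI = box (β * qq v2).imI := congrArg (fun w => w.2.1) heq
  have heq3 : box (β * qq v1).imJ = box (β * qq v2).imJ := congrArg (fun w => w.2.2.1) heq
  have heq4 : box (β * qq v1).imK = box (β * qq v2).imK := congrArg (fun w => w.2.2.2) heq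
  set y1 := β * qq v1 with hy1
  set y2 := β * qq v2 with hy2
  -- numerator
  set p : Quaternion ℝ := ⟨((⌊y1.re⌋ - ⌊y2.re⌋ : ℤ) : ℝ), ((⌊y1.imI⌋ - ⌊y2.imI⌋ : ℤ) : ℝ),
    ((⌊y1.imJ⌋ - ⌊y2.imJ⌋ : ℤ) : ℝ), ((⌊y1.imK⌋ - ⌊y2.imK⌋ : ℤ) : ℝ)⟩ with hp
  set q : Quaternion ℝ := qq v1 - qq v2 with hq
  have hqre : q.re = (v1.1 : ℝ) - (v2.1 : ℝ) := rfl
  have hqimI : q.imI = (v1.2.1 : ℝ) - (v2.2.1 : ℝ) := rfl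
  have hqimJ : q.imJ = (v1.2.2.1 : ℝ) - (v2.2.2.1 : ℝ) := rfl
  have hqimK : q.imK = (v1.2.2.2 : ℝ) - (v2.2.2.2 : ℝ) := rfl
  -- membership bounds
  simp only [D, Finset.mem_product, Finset.mem_range] at hv1 hv2
  obtain ⟨hv11, hv12, hv13, hv14⟩ := hv1
  obtain ⟨hv21, hv22, hv23, hv24⟩ := hv2
  refine ⟨p, qq v1 - qq v2, ?_, ?_, ?_, ?_, ?_⟩
  · exact mk_hurwitz _ _ _ _
  · refine Or.inl ⟨(v1.1:ℤ) - (v2.1:ℤ), (v1.2.1:ℤ) - (v2.2.1:ℤ),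
      (v1.2.2.1:ℤ) - (v2.2.2.1:ℤ), (v1.2.2.2:ℤ) - (v2.2.2.2:ℤ), ?_, ?_, ?_, ?_⟩ <;>
      push_cast <;> rfl
  · intro hq0
    apply hne
    rw [← hq] at hq0
    have e1 : (v1.1 : ℝ) - (v2.1 : ℝ) = 0 := by rw [← hqre, hq0]; rfl
    have e2 : (v1.2.1 : ℝ) - (v2.2.1 : ℝ) = 0 := by rw [← hqimI, hq0]; rfl
    have e3 : (v1.2.2.1 : ℝ) - (v2.2.2.1 : ℝ) = 0 := by rw [← hqimJ, hq0]; rfl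
    have e4 : (v1.2.2.2 : ℝ) - (v2.2.2.2 : ℝ) = 0 := by rw [← hqimK, hq0]; rfl
    have n1 : v1.1 = v2.1 := by have := sub_eq_zero.1 e1; exact_mod_cast this
    have n2 : v1.2.1 = v2.2.1 := by have := sub_eq_zero.1 e2; exact_mod_cast this
    have n3 : v1.2.2.1 = v2.2.2.1 := by have := sub_eq_zero.1 e3; exact_mod_cast this
    have n4 : v1.2.2.2 = v2.2.2.2 := by have := sub_eq_zero.1 e4; exact_mod_cast this
    exact Prod.ext n1 (Prod.ext n2 (Prod.ext n3 n4))
  · rw [← hq]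
    have habs : ∀ m n : ℕ, m < M → n < M → |(m:ℝ) - (n:ℝ)| ≤ (M:ℝ) - 1 := by
      intro m n hm hn
      have hm' : (m:ℝ) ≤ (M:ℝ) - 1 := by
        have : (m:ℝ) + 1 ≤ M := by exact_mod_cast hm
        linarith
      have hn' : (n:ℝ) ≤ (M:ℝ) - 1 := by
        have : (n:ℝ) + 1 ≤ M := by exact_mod_cast hn
        linarith
      have hm0 : (0:ℝ) ≤ m := Nat.cast_nonneg m
      have hn0 : (0:ℝ) ≤ n := Nat.cast_nonneg n
      rw [abs_le]
      constructor <;> linarith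
    have hM1 : (0:ℝ) ≤ (M:ℝ) - 1 := by
      have : (1:ℝ) ≤ M := by exact_mod_cast (by omega : 1 ≤ M)
      linarith
    apply norm_le_of_coords hM1
    · rw [hqre]; exact habs _ _ hv11 hv21
    · rw [hqimI]; exact habs _ _ hv12 hv22
    · rw [hqimJ]; exact habs _ _ hv13 hv23
    · rw [hqimK]; exact habs _ _ hv14 hv24
  · -- error bound
    have hdiff : β * (qq v1 - qq v2) - p = (y1 - y2) - p := by
      rw [hy1, hy2, mul_sub]
    rw [hdiff]
    have c1 : ((y1 - y2) - p).re = Int.fract y1.re - Int.fract y2.re := by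
      show y1.re - y2.re - ((⌊y1.re⌋ - ⌊y2.re⌋ : ℤ) : ℝ) = _
      rw [Int.cast_sub]
      have := Int.self_sub_floor y1.re
      have := Int.self_sub_floor y2.re
      unfold Int.fract
      ring
    have c2 : ((y1 - y2) - p).imI = Int.fract y1.imI - Int.fract y2.imI := by
      show y1.imI - y2.imI - ((⌊y1.imI⌋ - ⌊y2.imI⌋ : ℤ) : ℝ) = _
      rw [Int.cast_sub]; unfold Int.fract; ring
    have c3 : ((y1 - y2) - p).imJ = Int.fract y1.imJ - Int.fract y2.imJ := by
      show y1.imJ - y2.imJ - ((⌊y1.imJ⌋ - ⌊y2.imJ⌋ : ℤ) : ℝ) = _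
      rw [Int.cast_sub]; unfold Int.fract; ring
    have c4 : ((y1 - y2) - p).imK = Int.fract y1.imK - Int.fract y2.imK := by
      show y1.imK - y2.imK - ((⌊y1.imK⌋ - ⌊y2.imK⌋ : ℤ) : ℝ) = _
      rw [Int.cast_sub]; unfold Int.fract; ring
    have hK0 : (0:ℝ) ≤ 1 / K := by positivity
    have := norm_le_of_coords hK0
      (by rw [c1]; exact boxlem _ _ heq1)
      (by rw [c2]; exact boxlem _ _ heq2)
      (by rw [c3]; exact boxlem _ _ heq3)
      (by rw [c4]; exact boxlem _ _ heq4)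
    calc ‖y1 - y2 - p‖ ≤ 2 * (1 / K) := this
      _ = 2 / ((M:ℝ) - 1) := by rw [← hKM]; ring



lemma hurwitz_coords {x : Quaternion ℝ} (hx : IsHurwitz x) :
    ∃ e f g h : ℤ, x.re = e/2 ∧ x.imI = f/2 ∧ x.imJ = g/2 ∧ x.imK = h/2 := by
  rcases hx with ⟨a, b, c, d, ha, hb, hc, hd⟩ | ⟨a, b, c, d, ha, hb, hc, hd⟩
  · exact ⟨2*a, 2*b, 2*c, 2*d, by rw [ha]; push_cast; ring, by rw [hb]; push_cast; ring,
      by rw [hc]; push_cast; ring, by rw [hd]; push_cast; ring⟩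
  · exact ⟨2*a+1, 2*b+1, 2*c+1, 2*d+1, by rw [ha]; push_cast; ring, by rw [hb]; push_cast; ring,
      by rw [hc]; push_cast; ring, by rw [hd]; push_cast; ring⟩

/-- The set of Hurwitz integers in a ball is finite. -/
lemma hurwitz_finite_ball (Q : ℝ) : {x : Quaternion ℝ | IsHurwitz x ∧ ‖x‖ ≤ Q}.Finite := by
  classical
  set m : ℤ := ⌈2*Q⌉ with hm
  have key : {x : Quaternion ℝ | IsHurwitz x ∧ ‖x‖ ≤ Q} ⊆
      (fun v : ℤ × ℤ × ℤ × ℤ => (⟨(v.1:ℝ)/2, (v.2.1:ℝ)/2, (v.2.2.1:ℝ)/2, (v.2.2.2:ℝ)/2⟩ :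
        Quaternion ℝ)) '' (Set.Icc (-m, -m, -m, -m) (m, m, m, m)) := by
    rintro x ⟨hx, hxQ⟩
    obtain ⟨e, f, g, h, he, hf, hg, hh⟩ := hurwitz_coords hx
    refine ⟨(e, f, g, h), ?_, ?_⟩
    · have habs := coord_abs_le_norm x
      have bound : ∀ (k : ℤ) (y : ℝ), y = k/2 → |y| ≤ ‖x‖ → -m ≤ k ∧ k ≤ m := by
        intro k y hy hyx
        have h2Q : |(k:ℝ)| ≤ 2*Q := by
          have : |y| ≤ Q := le_trans hyx hxQ
          rw [hy] at this
          rw [abs_div] at this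
          have h2 : |(2:ℝ)| = 2 := by norm_num
          rw [h2] at this
          linarith [(div_le_iff₀ (by norm_num : (0:ℝ) < 2)).1 this]
        have hup : (k:ℝ) ≤ 2*Q := le_trans (le_abs_self _) h2Q
        have hlo : -(2*Q) ≤ (k:ℝ) := neg_le_of_abs_le h2Q
        constructor
        · have : (k:ℝ) ≥ -(m:ℝ) := by
            have : (2*Q : ℝ) ≤ (m:ℝ) := by exact_mod_cast Int.le_ceil (2*Q)
            linarith
          exact_mod_cast (by linarith : -(m:ℝ) ≤ (k:ℝ))
        · have : (k:ℝ) ≤ (m:ℝ) := le_trans hup (by exact_mod_cast Int.le_ceil (2*Q))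
          exact_mod_cast this
      obtain ⟨h1a, h1b⟩ := bound e x.re he habs.1
      obtain ⟨h2a, h2b⟩ := bound f x.imI hf habs.2.1
      obtain ⟨h3a, h3b⟩ := bound g x.imJ hg habs.2.2.1
      obtain ⟨h4a, h4b⟩ := bound h x.imK hh habs.2.2.2
      refine ⟨⟨h1a, h2a, h3a, h4a⟩, ⟨h1b, h2b, h3b, h4b⟩⟩
    · apply Quaternion.ext <;> simp [he, hf, hg, hh]
  exact (Set.finite_Icc _ _).image _ |>.subset key

/-- Hurwitz rationals. -/
def ratSet : Set (Quaternion ℝ) :=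
  {z | ∃ p q : Quaternion ℝ, IsHurwitz p ∧ IsHurwitz q ∧ z = p * q⁻¹}

lemma hurwitz_countable : {x : Quaternion ℝ | IsHurwitz x}.Countable := by
  have : {x : Quaternion ℝ | IsHurwitz x} ⊆
      (fun v : ℤ × ℤ × ℤ × ℤ => (⟨(v.1:ℝ)/2, (v.2.1:ℝ)/2, (v.2.2.1:ℝ)/2, (v.2.2.2:ℝ)/2⟩ :
        Quaternion ℝ)) '' Set.univ := by
    intro x hx
    obtain ⟨e, f, g, h, he, hf, hg, hh⟩ := hurwitz_coords hx
    exact ⟨(e, f, g, h), Set.mem_univ _, by apply Quaternion.ext <;> simp [he, hf, hg, hh]⟩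
  exact ((Set.countable_univ).image _).mono this

lemma ratSet_countable : ratSet.Countable := by
  have : ratSet ⊆ (fun pq : Quaternion ℝ × Quaternion ℝ => pq.1 * pq.2⁻¹) ''
      ({x | IsHurwitz x} ×ˢ {x | IsHurwitz x}) := by
    rintro z ⟨p, q, hp, hq, rfl⟩
    exact ⟨(p, q), ⟨hp, hq⟩, rfl⟩
  exact ((hurwitz_countable.prod hurwitz_countable).image _).mono this



/-- norm identity -/
lemma err_eq (β p q : Quaternion ℝ) (hq : q ≠ 0) :
    ‖β - p * q⁻¹‖ = ‖β * q - p‖ / ‖q‖ := by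
  have h : (β * q - p) * q⁻¹ = β - p * q⁻¹ := by
    rw [sub_mul, mul_assoc, mul_inv_cancel₀ hq, mul_one]
  rw [← h, norm_mul, norm_inv, div_eq_mul_inv]

/-- Refined Dirichlet: large denominators for irrational β. -/
lemma dirichlet' (β : Quaternion ℝ) (hβ : β ∉ ratSet) {δ : ℝ} (hδ : 0 < δ) :
    ∃ p q : Quaternion ℝ, IsHurwitz p ∧ IsHurwitz q ∧ q ≠ 0 ∧
      ‖β - p * q⁻¹‖ ≤ 4 / ‖q‖^2 ∧ 8 / ‖q‖^2 < δ := by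
  classical
  -- the finite set of nearby fractions with small denominators
  set Q : ℝ := Real.sqrt (8/δ) with hQ
  have hQ0 : 0 ≤ Q := Real.sqrt_nonneg _
  set T : Set (Quaternion ℝ) := {z | (∃ p q : Quaternion ℝ, IsHurwitz p ∧ IsHurwitz q ∧ q ≠ 0 ∧
      ‖q‖ ≤ Q ∧ z = p * q⁻¹) ∧ ‖β - z‖ ≤ 1} with hT
  have hTfin : T.Finite := by
    have hsub : T ⊆ (fun pq : Quaternion ℝ × Quaternion ℝ => pq.1 * pq.2⁻¹) ''
        (({x | IsHurwitz x ∧ ‖x‖ ≤ (‖β‖+1) * Q} ×ˢ {x | IsHurwitz x ∧ ‖x‖ ≤ Q})) := by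
      rintro z ⟨⟨p, q, hp, hq, h0, hQle, rfl⟩, hz1⟩
      refine ⟨(p, q), ⟨⟨hp, ?_⟩, ⟨hq, hQle⟩⟩, rfl⟩
      have hzn : ‖p * q⁻¹‖ ≤ ‖β‖ + 1 := by
        have h1 : ‖p * q⁻¹‖ - ‖β‖ ≤ ‖p * q⁻¹ - β‖ := norm_sub_norm_le _ _
        rw [norm_sub_rev] at h1
        linarith
      have : p = (p * q⁻¹) * q := by
        rw [mul_assoc, inv_mul_cancel₀ h0, mul_one]
      rw [this, norm_mul]
      have hqn : (0:ℝ) ≤ ‖q‖ := norm_nonneg q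
      apply mul_le_mul hzn hQle hqn (by positivity)
    exact (((hurwitz_finite_ball ((‖β‖+1) * Q)).prod
      (hurwitz_finite_ball Q)).image _).subset hsub
  -- positive distance to every element of T
  have hTpos : ∀ z ∈ T, 0 < ‖β - z‖ := by
    rintro z ⟨⟨p, q, hp, hq, h0, hQle, rfl⟩, _⟩
    rw [norm_pos_iff, sub_ne_zero]
    intro hcon
    exact hβ ⟨p, q, hp, hq, hcon⟩
  obtain ⟨ε, hε0, hε1, hεT⟩ : ∃ ε : ℝ, 0 < ε ∧ ε ≤ 1 ∧ ∀ z ∈ T, ε ≤ ‖β - z‖ := by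
    by_cases hne : hTfin.toFinset.Nonempty
    · refine ⟨min 1 (hTfin.toFinset.inf' hne (fun z => ‖β - z‖)), ?_, min_le_left _ _, ?_⟩
      · apply lt_min one_pos
        rw [Finset.lt_inf'_iff]
        intro z hz
        exact hTpos z (hTfin.mem_toFinset.1 hz)
      · intro z hz
        exact le_trans (min_le_right _ _)
          (Finset.inf'_le _ (hTfin.mem_toFinset.2 hz))
    · refine ⟨1, one_pos, le_refl _, ?_⟩
      intro z hz
      exact absurd ⟨z, hTfin.mem_toFinset.2 hz⟩ hne
  -- choose M large
  set M : ℕ := ⌈2/ε⌉₊ + 2 with hMdef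
  have hM : 2 ≤ M := by omega
  have hM1 : (1:ℝ) ≤ (M:ℝ) - 1 := by
    have h00 : (0:ℝ) ≤ (⌈2/ε⌉₊:ℝ) := Nat.cast_nonneg _
    have : (1:ℝ) ≤ ((⌈2/ε⌉₊:ℝ) + 1) := by linarith
    have hcast : (M:ℝ) = (⌈2/ε⌉₊:ℝ) + 2 := by push_cast [hMdef]; ring
    linarith
  have hMε : 2 / ((M:ℝ) - 1) < ε := by
    have h1 : 2/ε ≤ (⌈2/ε⌉₊:ℝ) := Nat.le_ceil _
    have hcast : (M:ℝ) - 1 = (⌈2/ε⌉₊:ℝ) + 1 := by push_cast [hMdef]; ring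
    rw [hcast, div_lt_iff₀ (by positivity)]
    have h2 : 2 = ε * (2/ε) := by field_simp
    calc (2:ℝ) = ε * (2/ε) := h2
      _ < ε * ((⌈2/ε⌉₊:ℝ) + 1) := by
          apply mul_lt_mul_of_pos_left _ hε0
          linarith
  obtain ⟨p, q, hp, hq, h0, hqle, herr⟩ := dirichlet β M hM
  have hq1 : 1 ≤ ‖q‖ := one_le_norm_hurwitz hq h0
  have hqpos : (0:ℝ) < ‖q‖ := by linarith
  have herr' : ‖β - p * q⁻¹‖ ≤ 2 / (((M:ℝ) - 1) * ‖q‖) := by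
    rw [err_eq β p q h0]
    rw [div_le_div_iff₀ hqpos (by positivity)]
    calc ‖β * q - p‖ * (((M:ℝ) - 1) * ‖q‖) = (‖β * q - p‖ * ((M:ℝ) - 1)) * ‖q‖ := by ring
      _ ≤ 2 * ‖q‖ := by
          apply mul_le_mul_of_nonneg_right _ hqpos.le
          rw [← le_div_iff₀ (by linarith : (0:ℝ) < (M:ℝ) - 1)] at *
          exact herr
  have hquality : ‖β - p * q⁻¹‖ ≤ 4 / ‖q‖^2 := by
    apply le_trans herr'
    rw [div_le_div_iff₀ (by positivity) (by positivity)]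
    calc 2 * ‖q‖^2 = (2 * ‖q‖) * ‖q‖ := by ring
      _ ≤ (2 * (2 * ((M:ℝ)-1))) * ‖q‖ := by
          apply mul_le_mul_of_nonneg_right _ hqpos.le
          linarith
      _ = 4 * (((M:ℝ) - 1) * ‖q‖) := by ring
  have hsmall : ‖β - p * q⁻¹‖ < ε := by
    apply lt_of_le_of_lt herr'
    apply lt_of_le_of_lt _ hMε
    apply div_le_div_of_nonneg_left (by norm_num) (by linarith)
    calc ((M:ℝ) - 1) = ((M:ℝ) - 1) * 1 := by ring
      _ ≤ ((M:ℝ) - 1) * ‖q‖ := by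
          apply mul_le_mul_of_nonneg_left hq1 (by linarith)
  -- the denominator must be large
  have hbig : Q < ‖q‖ := by
    by_contra hcon
    push_neg at hcon
    have hzT : p * q⁻¹ ∈ T := by
      refine ⟨⟨p, q, hp, hq, h0, hcon, rfl⟩, ?_⟩
      linarith [hsmall, hε1]
    linarith [hεT _ hzT, hsmall]
  refine ⟨p, q, hp, hq, h0, hquality, ?_⟩
  -- 8/‖q‖² < δ
  have hQsq : Q^2 = 8/δ := Real.sq_sqrt (by positivity)
  have h8 : 8/δ < ‖q‖^2 := by
    rw [← hQsq]
    apply sq_lt_sq' _ hbig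
    linarith
  calc 8 / ‖q‖^2 < 8 / (8/δ) := by
        apply div_lt_div_of_pos_left (by norm_num) (by positivity) h8
    _ = δ := by field_simp



noncomputable def QLE : (Fin 4 → ℝ) ≃ₗ[ℝ] Quaternion ℝ :=
  (QuaternionAlgebra.linearEquivTuple (-1:ℝ) (0:ℝ) (-1:ℝ)).symm

instance : (volume : Measure (Quaternion ℝ)).IsAddHaarMeasure := by
  have h : (volume : Measure (Quaternion ℝ)) = Measure.map QLE volume := rfl
  rw [h]
  exact MeasureTheory.Measure.MapLinearEquiv.isAddHaarMeasure _ _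

lemma vol_cB (x : Quaternion ℝ) {r : ℝ} (hr : 0 ≤ r) :
    volume (closedBall x r) = ENNReal.ofReal (r ^ 4) * volume (ball (0 : Quaternion ℝ) 1) := by
  rw [Measure.addHaar_closedBall _ _ hr, Quaternion.finrank_eq_four]

lemma ratSet_null : volume ratSet = 0 := ratSet_countable.measure_zero _

/-- the set of `c`-approximable quaternions -/
def Wset (c : ℝ) : Set (Quaternion ℝ) :=
  {β | ∃ p q : Quaternion ℝ, IsHurwitz p ∧ IsHurwitz q ∧ q ≠ 0 ∧ ‖β - p * q⁻¹‖ < c / ‖q‖^2}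

lemma isOpen_Wset (c : ℝ) : IsOpen (Wset c) := by
  rw [Metric.isOpen_iff]
  rintro β ⟨p, q, hp, hq, h0, hlt⟩
  refine ⟨c / ‖q‖^2 - ‖β - p * q⁻¹‖, by linarith, ?_⟩
  intro y hy
  rw [mem_ball, dist_eq_norm] at hy
  refine ⟨p, q, hp, hq, h0, ?_⟩
  calc ‖y - p * q⁻¹‖ ≤ ‖y - β‖ + ‖β - p * q⁻¹‖ := norm_sub_le_norm_sub_add_norm_sub _ _ _
    _ < (c / ‖q‖^2 - ‖β - p * q⁻¹‖) + ‖β - p * q⁻¹‖ := by linarith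
    _ = c / ‖q‖^2 := by ring

/-- Key density estimate -/
lemma key {c : ℝ} (hc : 0 < c) (hc1 : c ≤ 1) (x : Quaternion ℝ) {r : ℝ} (hr : 0 < r) :
    ENNReal.ofReal ((c/16)^4) * volume (closedBall x r) ≤
      volume (Wset c ∩ closedBall x (2*r)) := by
  classical
  set s : Set (Quaternion ℝ) := closedBall x r \ ratSet with hs
  have hs_vol : volume s = volume (closedBall x r) := measure_diff_null ratSet_null
  set f : Quaternion ℝ → Set ℝ := fun β => {ρ | ∃ p q : Quaternion ℝ,
    IsHurwitz p ∧ IsHurwitz q ∧ q ≠ 0 ∧ ‖β - p * q⁻¹‖ ≤ 4/‖q‖^2 ∧ ρ = 8/‖q‖^2} with hf_def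
  have hf : ∀ β ∈ s, ∀ δ > 0, (f β ∩ Ioo 0 δ).Nonempty := by
    intro β hβ δ hδ
    obtain ⟨p, q, hp, hq, h0, h1, h2⟩ := dirichlet' β hβ.2 hδ
    have hq1 : 1 ≤ ‖q‖ := one_le_norm_hurwitz hq h0
    refine ⟨8/‖q‖^2, ⟨p, q, hp, hq, h0, h1, rfl⟩, ⟨by positivity, h2⟩⟩
  obtain ⟨t, rad, t_count, ts, t_rad, t_cov, t_disj⟩ :=
    Besicovitch.exists_disjoint_closedBall_covering_ae volume f s hf (fun _ => r) (fun _ _ => hr)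
  have Hex : ∀ β ∈ t, ∃ pq : Quaternion ℝ × Quaternion ℝ, IsHurwitz pq.1 ∧ IsHurwitz pq.2 ∧
      pq.2 ≠ 0 ∧ ‖β - pq.1 * pq.2⁻¹‖ ≤ 4/‖pq.2‖^2 ∧ rad β = 8/‖pq.2‖^2 := by
    intro β hβ
    obtain ⟨p, q, hp, hq, h0, h1, h2⟩ := (t_rad β hβ).1
    exact ⟨(p, q), hp, hq, h0, h1, h2⟩
  choose! F hF1 hF2 hF3 hF4 hF5 using Hex
  set ctr : Quaternion ℝ → Quaternion ℝ := fun β => (F β).1 * ((F β).2)⁻¹ with hctr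
  set sB : Quaternion ℝ → Set (Quaternion ℝ) :=
    fun β => closedBall (ctr β) ((c/16) * rad β) with hsB
  have radpos : ∀ β ∈ t, 0 < rad β := fun β hβ => (t_rad β hβ).2.1
  have radltr : ∀ β ∈ t, rad β < r := fun β hβ => (t_rad β hβ).2.2
  have hNpos : ∀ β ∈ t, (0:ℝ) < ‖(F β).2‖^2 := by
    intro β hβ
    have := one_le_norm_hurwitz (hF2 β hβ) (hF3 β hβ)
    positivity
  -- (A) small ball inside Wset c
  have hA : ∀ β ∈ t, sB β ⊆ Wset c := by
    intro β hβ y hy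
    rw [hsB, mem_closedBall, dist_eq_norm] at hy
    refine ⟨(F β).1, (F β).2, hF1 β hβ, hF2 β hβ, hF3 β hβ, ?_⟩
    have hN := hNpos β hβ
    have h5 := hF5 β hβ
    calc ‖y - (F β).1 * ((F β).2)⁻¹‖ ≤ (c/16) * rad β := hy
      _ = (c/16) * (8/‖(F β).2‖^2) := by rw [h5]
      _ = (c/2) / ‖(F β).2‖^2 := by ring
      _ < c / ‖(F β).2‖^2 := by
          apply div_lt_div_of_pos_right _ hN
          linarith
  -- (B) small ball inside the Besicovitch ball
  have hB : ∀ β ∈ t, sB β ⊆ closedBall β (rad β) := by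
    intro β hβ y hy
    rw [hsB, mem_closedBall, dist_eq_norm] at hy
    rw [mem_closedBall, dist_eq_norm]
    have hN := hNpos β hβ
    have h5 := hF5 β hβ
    have h4 := hF4 β hβ
    calc ‖y - β‖ ≤ ‖y - ctr β‖ + ‖ctr β - β‖ := norm_sub_le_norm_sub_add_norm_sub _ _ _
      _ ≤ (c/16) * rad β + 4/‖(F β).2‖^2 := by
          apply add_le_add hy
          rw [hctr, ← norm_neg]
          simpa [neg_sub] using h4
      _ ≤ rad β := by
          rw [h5]
          have : (c/16) * (8/‖(F β).2‖^2) = (c/2)/‖(F β).2‖^2 := by ring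
          rw [this]
          rw [← add_div, div_le_div_iff₀ hN hN]
          nlinarith
  -- (C) Besicovitch ball inside the double ball
  have hC : ∀ β ∈ t, closedBall β (rad β) ⊆ closedBall x (2*r) := by
    intro β hβ y hy
    rw [mem_closedBall] at *
    have hβx : dist β x ≤ r := by
      have := (ts hβ).1
      rwa [mem_closedBall] at this
    calc dist y x ≤ dist y β + dist β x := dist_triangle _ _ _
      _ ≤ rad β + r := add_le_add hy hβx
      _ ≤ 2*r := by linarith [radltr β hβ]
  -- measure computation for small balls
  have meas_small : ∀ β ∈ t, volume (sB β)
      = ENNReal.ofReal ((c/16)^4) * volume (closedBall β (rad β)) := by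
    intro β hβ
    have h1 : (0:ℝ) ≤ (c/16) * rad β := by
      have := radpos β hβ
      positivity
    have h2 : (0:ℝ) ≤ rad β := (radpos β hβ).le
    rw [hsB, vol_cB _ h1, vol_cB _ h2]
    rw [mul_pow, ENNReal.ofReal_mul (by positivity), mul_assoc]
  -- sum up
  have disj' : t.PairwiseDisjoint sB := by
    intro a ha b hb hab
    exact (t_disj ha hb hab).mono (hB a ha) (hB b hb)
  have hsum : volume (⋃ β ∈ t, sB β) = ∑' β : t, volume (sB (β : Quaternion ℝ)) :=
    measure_biUnion t_count disj' (fun β _ => measurableSet_closedBall)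
  have hsum2 : volume (⋃ β ∈ t, closedBall β (rad β)) = ∑' β : t, volume (closedBall (β : Quaternion ℝ) (rad β)) :=
    measure_biUnion t_count t_disj (fun β _ => measurableSet_closedBall)
  have hcover : volume (closedBall x r) ≤ ∑' β : t, volume (closedBall (β : Quaternion ℝ) (rad β)) := by
    rw [← hs_vol, ← hsum2]
    calc volume s ≤ volume ((s \ ⋃ β ∈ t, closedBall β (rad β)) ∪ (⋃ β ∈ t, closedBall β (rad β))) := by
          apply measure_mono
          intro y hy
          by_cases hmem : y ∈ ⋃ β ∈ t, closedBall β (rad β)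
          · exact Or.inr hmem
          · exact Or.inl ⟨hy, hmem⟩
      _ ≤ volume (s \ ⋃ β ∈ t, closedBall β (rad β)) + volume (⋃ β ∈ t, closedBall β (rad β)) :=
          measure_union_le _ _
      _ = volume (⋃ β ∈ t, closedBall β (rad β)) := by rw [t_cov, zero_add]
  calc ENNReal.ofReal ((c/16)^4) * volume (closedBall x r)
      ≤ ENNReal.ofReal ((c/16)^4) * ∑' β : t, volume (closedBall (β : Quaternion ℝ) (rad β)) := by
        exact mul_le_mul_right hcover _
    _ = ∑' β : t, ENNReal.ofReal ((c/16)^4) * volume (closedBall (β : Quaternion ℝ) (rad β)) :=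
        ENNReal.tsum_mul_left.symm
    _ = ∑' β : t, volume (sB (β : Quaternion ℝ)) := by
        apply tsum_congr
        intro β
        exact (meas_small β β.2).symm
    _ = volume (⋃ β ∈ t, sB β) := hsum.symm
    _ ≤ volume (Wset c ∩ closedBall x (2*r)) := by
        apply measure_mono
        intro y hy
        rw [mem_iUnion₂] at hy
        obtain ⟨β, hβ, hyβ⟩ := hy
        exact ⟨hA β hβ hyβ, hC β hβ (hB β hβ hyβ)⟩


lemma Wc_conull {c : ℝ} (hc : 0 < c) (hc1 : c ≤ 1) : volume ((Wset c)ᶜ) = 0 := by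
  classical
  by_contra hE
  set E : Set (Quaternion ℝ) := (Wset c)ᶜ with hEdef
  have hW : MeasurableSet (Wset c) := (isOpen_Wset c).measurableSet
  set γ : ℝ≥0∞ := ENNReal.ofReal ((c/16)^4 / 16) with hγ
  have hγ0 : 0 < γ := by
    rw [hγ]
    apply ENNReal.ofReal_pos.2
    positivity
  have hγ1 : γ ≤ 1 := by
    rw [hγ]
    apply ENNReal.ofReal_le_one.2
    have h1 : c/16 ≤ 1 := by linarith
    have h2 : (0:ℝ) ≤ c/16 := by positivity
    have := pow_le_one₀ h2 h1 (n := 4)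
    linarith
  -- uniform density estimate
  have key2 : ∀ (x : Quaternion ℝ) (ρ : ℝ), 0 < ρ →
      volume (E ∩ closedBall x ρ) ≤ (1 - γ) * volume (closedBall x ρ) := by
    intro x ρ hρ
    have h2 : (0:ℝ) < ρ/2 := by linarith
    have hkey := key hc hc1 x h2
    have hρeq : 2 * (ρ/2) = ρ := by ring
    rw [hρeq] at hkey
    -- rewrite the half-ball measure
    have hWB : γ * volume (closedBall x ρ) ≤ volume (Wset c ∩ closedBall x ρ) := by
      apply le_trans _ hkey
      rw [vol_cB _ h2.le, vol_cB _ hρ.le, hγ]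
      rw [← mul_assoc, ← mul_assoc, ← ENNReal.ofReal_mul (by positivity),
        ← ENNReal.ofReal_mul (by positivity)]
      apply mul_le_mul_left
      apply ENNReal.ofReal_le_ofReal
      have : (ρ/2)^4 = ρ^4/16 := by ring
      rw [this]
      have h4 : (0:ℝ) ≤ ρ^4 := by positivity
      calc (c/16)^4/16 * ρ^4 = (c/16)^4 * (ρ^4/16) := by ring
        _ ≤ (c/16)^4 * (ρ^4/16) := le_refl _
    have hEB : E ∩ closedBall x ρ = closedBall x ρ \ (Wset c ∩ closedBall x ρ) := by
      ext y
      simp only [hEdef, mem_inter_iff, mem_compl_iff, mem_diff]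
      tauto
    have hfin : volume (Wset c ∩ closedBall x ρ) ≠ ⊤ :=
      ((measure_mono Set.inter_subset_right).trans_lt measure_closedBall_lt_top).ne
    rw [hEB, measure_diff Set.inter_subset_right
      ((hW.inter measurableSet_closedBall).nullMeasurableSet) hfin]
    have hsub : (1 - γ) * volume (closedBall x ρ)
        = volume (closedBall x ρ) - γ * volume (closedBall x ρ) := by
      rw [ENNReal.sub_mul (fun _ _ => measure_closedBall_lt_top.ne), one_mul]
    rw [hsub]
    exact tsub_le_tsub_left hWB _
  -- density point
  have hae := Besicovitch.ae_tendsto_measure_inter_div (volume : Measure (Quaternion ℝ)) E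
  have hres : (volume : Measure (Quaternion ℝ)).restrict E ≠ 0 := by
    intro hcon
    apply hE
    rw [← Measure.restrict_eq_zero]
    exact hcon
  have : NeBot (ae ((volume : Measure (Quaternion ℝ)).restrict E)) := ae_neBot.2 hres
  obtain ⟨x₀, hx₀⟩ := hae.exists
  -- ratio bound
  have hub : ∀ᶠ ρ in 𝓝[>] (0:ℝ),
      volume (E ∩ closedBall x₀ ρ) / volume (closedBall x₀ ρ) ≤ 1 - γ := by
    apply eventually_nhdsWithin_of_forall
    intro ρ hρ
    have hρ0 : (0:ℝ) < ρ := hρ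
    have hb0 : volume (closedBall x₀ ρ) ≠ 0 := (measure_closedBall_pos _ _ hρ0).ne'
    have hbt : volume (closedBall x₀ ρ) ≠ ⊤ := measure_closedBall_lt_top.ne
    calc volume (E ∩ closedBall x₀ ρ) / volume (closedBall x₀ ρ)
        ≤ ((1 - γ) * volume (closedBall x₀ ρ)) / volume (closedBall x₀ ρ) :=
          ENNReal.div_le_div_right (key2 x₀ ρ hρ0) _
      _ = 1 - γ := by
          rw [mul_div_assoc, ENNReal.div_self hb0 hbt, mul_one]
  have hle : (1:ℝ≥0∞) ≤ 1 - γ := le_of_tendsto hx₀ hub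
  have hlt : (1:ℝ≥0∞) - γ < 1 :=
    ENNReal.sub_lt_self ENNReal.one_ne_top one_ne_zero hγ0.ne'
  exact absurd hle (not_le.2 hlt)


theorem main : volume BadH = 0 := by

  have main : ∀ k : ℕ, volume ((Wset (min 1 (1/((k:ℝ)+1))))ᶜ) = 0 := by
    intro k
    apply Wc_conull
    · apply lt_min one_pos
      positivity
    · exact min_le_left _ _
  have hsub : BadH ⊆ ⋃ k : ℕ, (Wset (min 1 (1/((k:ℝ)+1))))ᶜ := by
    intro β hβ
    obtain ⟨c, hc, hball⟩ := hβ
    obtain ⟨k, hk⟩ := exists_nat_one_div_lt hc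
    rw [mem_iUnion]
    refine ⟨k, ?_⟩
    intro hmem
    obtain ⟨p, q, hp, hq, h0, hlt⟩ := hmem
    have hb := hball p q hp hq h0
    have hq0 : (0:ℝ) < ‖q‖^2 := by
      have : q ≠ 0 := h0
      have := norm_pos_iff.2 this
      positivity
    have hmin : min 1 (1/((k:ℝ)+1)) ≤ c := le_trans (min_le_right _ _) hk.le
    have : min 1 (1/((k:ℝ)+1)) / ‖q‖^2 ≤ c / ‖q‖^2 := by gcongr
    linarith
  refine le_antisymm ?_ zero_le
  calc volume BadH ≤ volume (⋃ k : ℕ, (Wset (min 1 (1/((k:ℝ)+1))))ᶜ) := measure_mono hsub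
    _ = 0 := measure_iUnion_null main


end BadHZero

/-- The badly approximable quaternions form a Lebesgue-null set. -/
theorem badH_volume_zero : volume BadH = 0 := BadHZero.main
end
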